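/- arXiv:2404.09411 — 3 statements merged into one kernel-verified Lean document; each statement's English description precedes it below -/
import Mathlib

section
/- Let D be a symmetric N×N matrix with eigendecomposition of F = −JDJ given by eigenpairs {(λ_i, v_i)}. Then the minimum of ‖D − D'‖_F² over symmetric D' satisfying that −JD'J is positive semidefinite equals Σ_{i: λ_i < 0} λ_i², i.e., the sum of squares of the negative eigenvalues of F. -/
open Matrix

/-- The `N × N` all-ones matrix. -/
def onesM (N : ℕ) : Matrix (Fin N) (Fin N) ℝ := Matrix.of fun _ _ => 1

/-- The averaging matrix `P = (1/N) 1_N 1_Nᵀ`. -/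
noncomputable def avgM (N : ℕ) : Matrix (Fin N) (Fin N) ℝ := (N : ℝ)⁻¹ • onesM N

/-- The centering matrix `J = I_N − (1/N) 1_N 1_Nᵀ`. -/
noncomputable def centerM (N : ℕ) : Matrix (Fin N) (Fin N) ℝ := 1 - avgM N

/-- Squared Frobenius norm. -/
def frobSq {N : ℕ} (M : Matrix (Fin N) (Fin N) ℝ) : ℝ := ∑ i, ∑ j, (M i j) ^ 2

lemma avgM_mul_avgM (N : ℕ) : avgM N * avgM N = avgM N := by
  rcases Nat.eq_zero_or_pos N with h | h
  · subst h; ext i j; exact i.elim0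
  · have hN : (N:ℝ) ≠ 0 := Nat.cast_ne_zero.mpr h.ne'
    ext i j
    simp [avgM, onesM, Matrix.mul_apply, Finset.sum_const, Finset.card_univ]
    field_simp

lemma avgM_isHermitian (N : ℕ) : (avgM N).IsHermitian := by
  ext i j; simp [avgM, onesM, Matrix.conjTranspose_apply]

lemma centerM_mul_self (N : ℕ) : centerM N * centerM N = centerM N := by
  simp [centerM, sub_mul, mul_sub, avgM_mul_avgM]

lemma centerM_isHermitian (N : ℕ) : (centerM N).IsHermitian := by
  ext i j; simp [centerM, avgM, onesM, Matrix.conjTranspose_apply, Matrix.one_apply, eq_comm]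

lemma avgM_posSemidef (N : ℕ) : (avgM N).PosSemidef := by
  have h := Matrix.posSemidef_conjTranspose_mul_self (avgM N)
  rwa [(avgM_isHermitian N).eq, avgM_mul_avgM] at h

lemma frobSq_eq_trace {N : ℕ} (M : Matrix (Fin N) (Fin N) ℝ) :
    frobSq M = (Mᴴ * M).trace := by
  simp only [frobSq, Matrix.trace, Matrix.diag, Matrix.mul_apply, Matrix.conjTranspose_apply,
    star_trivial, sq]
  exact Finset.sum_comm

lemma frobSq_nonneg {N : ℕ} (M : Matrix (Fin N) (Fin N) ℝ) : 0 ≤ frobSq M :=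
  Finset.sum_nonneg fun _ _ => Finset.sum_nonneg fun _ _ => sq_nonneg _

lemma frobSq_neg {N : ℕ} (M : Matrix (Fin N) (Fin N) ℝ) : frobSq (-M) = frobSq M := by
  simp [frobSq]

lemma frobSq_transpose {N : ℕ} (M : Matrix (Fin N) (Fin N) ℝ) : frobSq Mᵀ = frobSq M := by
  simp only [frobSq, Matrix.transpose_apply]
  exact Finset.sum_comm

lemma psd_diag_nonneg {N : ℕ} {M : Matrix (Fin N) (Fin N) ℝ} (h : M.PosSemidef) (i : Fin N) :
    0 ≤ M i i := by
  exact h.diag_nonneg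

lemma psd_trace_nonneg {N : ℕ} {M : Matrix (Fin N) (Fin N) ℝ} (h : M.PosSemidef) :
    0 ≤ M.trace :=
  Finset.sum_nonneg fun i _ => psd_diag_nonneg h i

lemma frobSq_conj {N : ℕ} (M U : Matrix (Fin N) (Fin N) ℝ)
    (hU1 : star U * U = 1) (hU2 : U * star U = 1) :
    frobSq (star U * M * U) = frobSq M := by
  rw [frobSq_eq_trace, frobSq_eq_trace]
  have hU2' : U * Uᴴ = 1 := by rw [← Matrix.star_eq_conjTranspose]; exact hU2
  have : (star U * M * U)ᴴ * (star U * M * U) = star U * (Mᴴ * M) * U := by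
    simp only [Matrix.conjTranspose_mul, Matrix.star_eq_conjTranspose,
      Matrix.conjTranspose_conjTranspose, Matrix.mul_assoc]
    rw [← Matrix.mul_assoc U Uᴴ, hU2']
    simp [Matrix.mul_assoc]
  rw [this, Matrix.trace_mul_cycle, ← Matrix.mul_assoc, hU2, Matrix.one_mul]

lemma frobSq_centerM_mul_le {N : ℕ} (A : Matrix (Fin N) (Fin N) ℝ) :
    frobSq (centerM N * A) ≤ frobSq A := by
  have key : frobSq A - frobSq (centerM N * A) = (Aᴴ * avgM N * A).trace := by
    rw [frobSq_eq_trace, frobSq_eq_trace]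
    have h1 : (centerM N * A)ᴴ * (centerM N * A) = Aᴴ * centerM N * A := by
      rw [Matrix.conjTranspose_mul, (centerM_isHermitian N).eq, Matrix.mul_assoc (Aᴴ),
        ← Matrix.mul_assoc (centerM N), centerM_mul_self, ← Matrix.mul_assoc]
    rw [h1, ← Matrix.trace_sub]
    congr 1
    rw [centerM]
    noncomm_ring
  have hpsd : (Aᴴ * avgM N * A).PosSemidef := by
    simpa using (avgM_posSemidef N).conjTranspose_mul_mul_same A
  linarith [psd_trace_nonneg hpsd, key]

lemma frobSq_mul_centerM_le {N : ℕ} (A : Matrix (Fin N) (Fin N) ℝ) :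
    frobSq (A * centerM N) ≤ frobSq A := by
  have hct : (centerM N)ᵀ = centerM N := by
    rw [← Matrix.conjTranspose_eq_transpose_of_trivial]; exact (centerM_isHermitian N).eq
  have h := frobSq_centerM_mul_le Aᵀ
  rw [← frobSq_transpose (A * centerM N), Matrix.transpose_mul, hct, ← frobSq_transpose A]
  exact h

lemma frobSq_diagonal {N : ℕ} (μ : Fin N → ℝ) :
    frobSq (Matrix.diagonal μ) = ∑ i, μ i ^ 2 := by
  unfold frobSq
  refine Finset.sum_congr rfl fun i _ => ?_
  rw [Finset.sum_eq_single i]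
  · simp
  · intro j _ hj; simp [Matrix.diagonal_apply_ne' μ hj]
  · simp

lemma lowerBound_psd {N : ℕ} (lam : Fin N → ℝ) {H : Matrix (Fin N) (Fin N) ℝ}
    (hH : H.PosSemidef) :
    ∑ i ∈ Finset.univ.filter (fun i => lam i < 0), lam i ^ 2
      ≤ frobSq (Matrix.diagonal lam - H) := by
  have step1 : ∑ i ∈ Finset.univ.filter (fun i => lam i < 0), lam i ^ 2
      ≤ ∑ i ∈ Finset.univ.filter (fun i => lam i < 0), (lam i - H i i) ^ 2 := by
    refine Finset.sum_le_sum fun i hi => ?_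
    have hneg : lam i < 0 := (Finset.mem_filter.mp hi).2
    have hH' : 0 ≤ H i i := psd_diag_nonneg hH i
    nlinarith
  have step2 : ∑ i ∈ Finset.univ.filter (fun i => lam i < 0), (lam i - H i i) ^ 2
      ≤ ∑ i, (lam i - H i i) ^ 2 := by
    apply Finset.sum_le_sum_of_subset_of_nonneg (f := fun i => (lam i - H i i) ^ 2)
      (Finset.filter_subset _ _)
    intro i _ _; exact sq_nonneg _
  have step3 : ∑ i, (lam i - H i i) ^ 2 ≤ frobSq (Matrix.diagonal lam - H) := by
    unfold frobSq
    refine Finset.sum_le_sum fun i _ => ?_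
    have : (lam i - H i i) ^ 2 = ((Matrix.diagonal lam - H) i i) ^ 2 := by
      simp [Matrix.sub_apply]
    rw [this]
    exact Finset.single_le_sum (f := fun j => ((Matrix.diagonal lam - H) i j) ^ 2)
      (fun j _ => sq_nonneg _) (Finset.mem_univ i)
  linarith

lemma conj_mul_conj {N : ℕ} (U : Matrix (Fin N) (Fin N) ℝ) (hU1 : star U * U = 1)
    (a b : Fin N → ℝ) :
    (U * Matrix.diagonal a * star U) * (U * Matrix.diagonal b * star U)
      = U * Matrix.diagonal (a * b) * star U := by
  have h : star U * (U * (Matrix.diagonal b * star U)) = Matrix.diagonal b * star U := by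
    rw [← Matrix.mul_assoc, hU1, Matrix.one_mul]
  simp only [Matrix.mul_assoc]
  rw [h, ← Matrix.mul_assoc (Matrix.diagonal a), Matrix.diagonal_mul_diagonal]
  rfl

lemma sandwich {N : ℕ} (U A : Matrix (Fin N) (Fin N) ℝ) (hU1 : star U * U = 1) :
    star U * (U * A * star U) * U = A := by
  rw [← Matrix.mul_assoc, ← Matrix.mul_assoc, hU1, Matrix.one_mul, Matrix.mul_assoc, hU1,
    Matrix.mul_one]

/-- The minimum of `‖D − D'‖_F²` over symmetric `D'` with `−JD'J` positive
    semidefinite equals the sum of the squares of the negative eigenvalues of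
    the criterion matrix `F = −JDJ`. -/
theorem min_frobSq_over_psd_criterion {N : ℕ} (D : Matrix (Fin N) (Fin N) ℝ)
    (hD : D.IsSymm)
    (hF : (-(centerM N * D * centerM N)).IsHermitian) :
    IsLeast
      {s : ℝ | ∃ D' : Matrix (Fin N) (Fin N) ℝ, D'.IsSymm ∧
        (-(centerM N * D' * centerM N)).PosSemidef ∧ s = frobSq (D - D')}
      (∑ i ∈ Finset.univ.filter (fun i => hF.eigenvalues i < 0),
        (hF.eigenvalues i) ^ 2) := by
  set Jm := centerM N with hJm
  set Fm := -(centerM N * D * centerM N) with hFmdef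
  set U : Matrix (Fin N) (Fin N) ℝ := (hF.eigenvectorUnitary : Matrix (Fin N) (Fin N) ℝ) with hUdef
  set lam := hF.eigenvalues with hlam
  have hU1 : star U * U = 1 := Matrix.mem_unitaryGroup_iff'.mp hF.eigenvectorUnitary.2
  have hU2 : U * star U = 1 := Matrix.mem_unitaryGroup_iff.mp hF.eigenvectorUnitary.2
  have hspec : Fm = U * Matrix.diagonal lam * star U := by
    have h := hF.spectral_theorem
    rwa [show (RCLike.ofReal ∘ hF.eigenvalues : Fin N → ℝ) = lam from funext fun i => rfl] at h
  have hJFm : Jm * Fm = Fm := by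
    rw [hFmdef, hJm, Matrix.mul_neg, ← Matrix.mul_assoc, ← Matrix.mul_assoc,
      centerM_mul_self]
  have hFmJ : Fm * Jm = Fm := by
    rw [hFmdef, hJm, Matrix.neg_mul, Matrix.mul_assoc, Matrix.mul_assoc, centerM_mul_self,
      ← Matrix.mul_assoc]
  constructor
  · -- membership: exhibit the minimizer
    set μ : Fin N → ℝ := fun i => if lam i < 0 then lam i else 0 with hμ
    set ι : Fin N → ℝ := fun i => if lam i < 0 then (1:ℝ) else 0 with hι
    set Fneg : Matrix (Fin N) (Fin N) ℝ := U * Matrix.diagonal μ * star U with hFneg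
    set S : Matrix (Fin N) (Fin N) ℝ := U * Matrix.diagonal ι * star U with hS
    have hlι : lam * ι = μ := by funext i; by_cases h : lam i < 0 <;> simp [hμ, hι, h]
    have hιl : ι * lam = μ := by funext i; by_cases h : lam i < 0 <;> simp [hμ, hι, h]
    have hFS : Fm * S = Fneg := by rw [hspec, hS, conj_mul_conj U hU1, hlι, hFneg]
    have hSF : S * Fm = Fneg := by rw [hspec, hS, conj_mul_conj U hU1, hιl, hFneg]
    have hJFneg : Jm * Fneg = Fneg := by rw [← hFS, ← Matrix.mul_assoc, hJFm]
    have hFnegJ : Fneg * Jm = Fneg := by rw [← hSF, Matrix.mul_assoc, hFmJ]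
    have hFnegH : Fnegᴴ = Fneg := by
      rw [hFneg]
      simp only [Matrix.conjTranspose_mul, Matrix.star_eq_conjTranspose,
        Matrix.conjTranspose_conjTranspose, Matrix.diagonal_conjTranspose]
      rw [show star μ = μ from funext fun i => star_trivial _, Matrix.mul_assoc]
    refine ⟨D + Fneg, ?_, ?_, ?_⟩
    · rw [Matrix.IsSymm, Matrix.transpose_add, hD,
        ← Matrix.conjTranspose_eq_transpose_of_trivial, hFnegH]
    · have hkey : -(Jm * (D + Fneg) * Jm) = Fm - Fneg := by
        rw [Matrix.mul_add, Matrix.add_mul, neg_add, Matrix.mul_assoc Jm Fneg Jm,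
          hFnegJ, hJFneg, hFmdef, hJm]
        abel
      rw [show centerM N = Jm from hJm.symm, hkey]
      have : Fm - Fneg = U * Matrix.diagonal (fun i => lam i - μ i) * star U := by
        rw [hspec, hFneg, ← Matrix.sub_mul, ← Matrix.mul_sub, Matrix.diagonal_sub]
      rw [this]
      have hd : (Matrix.diagonal (fun i => lam i - μ i)).PosSemidef := by
        apply Matrix.PosSemidef.diagonal
        intro i
        by_cases h : lam i < 0 <;> simp [hμ, h] <;> linarith [not_lt.mp h]
      simpa [Matrix.star_eq_conjTranspose] using hd.mul_mul_conjTranspose_same U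
    · have h1 : D - (D + Fneg) = -Fneg := by abel
      rw [h1, frobSq_neg]
      have h2 : star U * Fneg * U = Matrix.diagonal μ := by
        rw [hFneg]; exact sandwich U _ hU1
      rw [← frobSq_conj Fneg U hU1 hU2, h2, frobSq_diagonal]
      rw [Finset.sum_filter]
      refine Finset.sum_congr rfl fun i _ => ?_
      by_cases h : lam i < 0 <;> simp [hμ, h]
  · -- lower bound
    rintro s ⟨D', hsym, hpsd, rfl⟩
    set G := -(centerM N * D' * centerM N) with hG
    set M := D - D' with hM
    have hJMJ : Jm * M * Jm = -(Fm - G) := by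
      rw [hM, Matrix.mul_sub, Matrix.sub_mul, hFmdef, hG, hJm]
      abel
    have c1 : frobSq (Jm * M * Jm) ≤ frobSq M :=
      le_trans (frobSq_mul_centerM_le (Jm * M)) (frobSq_centerM_mul_le M)
    have c2 : frobSq (Jm * M * Jm) = frobSq (Matrix.diagonal lam - star U * G * U) := by
      rw [hJMJ, frobSq_neg, ← frobSq_conj (Fm - G) U hU1 hU2, Matrix.mul_sub,
        Matrix.sub_mul, hspec, sandwich U _ hU1]
    have hH : (star U * G * U).PosSemidef := by
      simpa [Matrix.star_eq_conjTranspose] using hpsd.conjTranspose_mul_mul_same U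
    calc ∑ i ∈ Finset.univ.filter (fun i => lam i < 0), lam i ^ 2
        ≤ frobSq (Matrix.diagonal lam - star U * G * U) := lowerBound_psd lam hH
      _ = frobSq (Jm * M * Jm) := c2.symm
      _ ≤ frobSq M := c1
end

section
/- For a given symmetric N×N matrix A, there exists a unique symmetric N×N matrix B such that A + B is hollow (zero diagonal) and JBJ = 0. -/
open Matrix

lemma avg_mul_apply {N} (B : Matrix (Fin N) (Fin N) ℝ) (i j : Fin N) :
    (avgM N * B) i j = (N:ℝ)⁻¹ * ∑ k, B k j := by
  simp [avgM, onesM, Matrix.mul_apply, Finset.mul_sum]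

lemma mul_avg_apply {N} (B : Matrix (Fin N) (Fin N) ℝ) (i j : Fin N) :
    (B * avgM N) i j = (N:ℝ)⁻¹ * ∑ k, B i k := by
  simp [avgM, onesM, Matrix.mul_apply, Finset.mul_sum, Finset.sum_mul, mul_comm]

lemma center_expand {N} (B : Matrix (Fin N) (Fin N) ℝ) :
    centerM N * B * centerM N
      = B - avgM N * B - B * avgM N + avgM N * B * avgM N := by
  unfold centerM; noncomm_ring

lemma JBJ_apply {N} (B : Matrix (Fin N) (Fin N) ℝ) (i j : Fin N) :
    (centerM N * B * centerM N) i j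
      = B i j - (N:ℝ)⁻¹ * ∑ k, B k j - (N:ℝ)⁻¹ * ∑ k, B i k
        + (N:ℝ)⁻¹ * ((N:ℝ)⁻¹ * ∑ k, ∑ l, B k l) := by
  rw [center_expand]
  simp only [Matrix.add_apply, Matrix.sub_apply]
  rw [avg_mul_apply, mul_avg_apply, mul_avg_apply]
  have h : (∑ k, (avgM N * B) i k) = ∑ k, (N:ℝ)⁻¹ * ∑ l, B l k :=
    Finset.sum_congr rfl fun k _ => avg_mul_apply B i k
  rw [h, ← Finset.mul_sum]
  rw [show (∑ k : Fin N, ∑ l : Fin N, B l k) = ∑ k, ∑ l, B k l from Finset.sum_comm]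

/-- For a symmetric matrix `A` there is a unique symmetric matrix `B` such
    that `A + B` is hollow and `JBJ = 0`. -/
theorem exists_unique_hollowing_correction {N : ℕ}
    (A : Matrix (Fin N) (Fin N) ℝ) (hA : A.IsSymm) :
    ∃! B : Matrix (Fin N) (Fin N) ℝ,
      B.IsSymm ∧ (∀ i, (A + B) i i = 0) ∧
        centerM N * B * centerM N = 0 := by
  refine ⟨Matrix.of fun i j => -(A i i + A j j)/2, ⟨?_, ?_, ?_⟩, ?_⟩
  · show _ᵀ = _
    ext i j
    simp [Matrix.transpose_apply]
    ring
  · intro i; simp [Matrix.add_apply]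
  · ext i j
    rcases Nat.eq_zero_or_pos N with h0 | hN
    · subst h0; exact i.elim0
    have hNne : (N:ℝ) ≠ 0 := Nat.cast_ne_zero.mpr hN.ne'
    rw [JBJ_apply]
    have h1 : ∀ m : Fin N,
        (∑ k, (Matrix.of fun i j => -(A i i + A j j)/2 : Matrix (Fin N) (Fin N) ℝ) m k)
        = -((N:ℝ) * A m m + ∑ k, A k k)/2 := by
      intro m
      simp only [Matrix.of_apply]
      have : ∀ x : Fin N, (-(A m m + A x x)/2 : ℝ) = -(A m m)/2 + -(A x x)/2 := by
        intro x; ring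
      rw [Finset.sum_congr rfl fun x _ => this x, Finset.sum_add_distrib,
        Finset.sum_const, Finset.card_univ, Fintype.card_fin, nsmul_eq_mul]
      simp only [neg_div, Finset.sum_neg_distrib, ← Finset.sum_div]
      ring
    have hcol : (∑ k, (Matrix.of fun i j => -(A i i + A j j)/2 : Matrix (Fin N) (Fin N) ℝ) k j)
        = -((N:ℝ) * A j j + ∑ k, A k k)/2 := by
      rw [← h1 j]
      apply Finset.sum_congr rfl
      intro k _
      simp only [Matrix.of_apply]
      ring
    have h2 : (∑ k, ∑ l, (Matrix.of fun i j => -(A i i + A j j)/2 : Matrix (Fin N) (Fin N) ℝ) k l)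
        = -((N:ℝ) * ∑ k, A k k) := by
      rw [Finset.sum_congr rfl fun k _ => h1 k]
      simp only [neg_div, Finset.sum_neg_distrib, add_div, Finset.sum_add_distrib,
        Finset.sum_const, Finset.card_univ, Fintype.card_fin, nsmul_eq_mul,
        ← Finset.sum_div, ← Finset.mul_sum]
      ring
    rw [hcol, h1 i, h2]
    simp only [Matrix.of_apply, Matrix.zero_apply]
    field_simp
    ring
  · rintro C ⟨hC, hdiag, hJ⟩
    have hsym : ∀ p q : Fin N, C p q = C q p := by
      intro p q
      conv_lhs => rw [← hC]
      rfl
    have key : ∀ p q : Fin N,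
        C p q - (N:ℝ)⁻¹ * (∑ k, C q k) - (N:ℝ)⁻¹ * (∑ k, C p k)
          + (N:ℝ)⁻¹ * ((N:ℝ)⁻¹ * ∑ k, ∑ l, C k l) = 0 := by
      intro p q
      have h := congrFun (congrFun hJ p) q
      rw [JBJ_apply] at h
      have hc : (∑ k, C k q) = ∑ k, C q k :=
        Finset.sum_congr rfl fun k _ => hsym k q
      rw [hc] at h
      simpa using h
    have hdiag' : ∀ m, C m m = -A m m := by
      intro m
      have := hdiag m
      simp [Matrix.add_apply] at this
      linarith
    ext i j
    have e1 := key i j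
    have e2 := key i i
    have e3 := key j j
    rw [hdiag' i] at e2
    rw [hdiag' j] at e3
    simp only [Matrix.of_apply]
    linarith
end

section
/- Let D be an N×N symmetric hollow nonnegative matrix with criterion matrix F = −JDJ having eigenpairs {(λ_i, v_i)}. Define Δg_i = (1/2) Σ_{j: λ_j<0} λ_j v_{i,j}². Then the optimal stress L* = min over Euclidean distance matrices D' of ‖D − D'‖_F² satisfies L* ≤ Σ_{i,j} (Δg_i + Δg_j)² + Σ_{i: λ_i<0} λ_i². -/
open Matrix

/-- `D'` is a Euclidean distance matrix (Gower criterion form): symmetric,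
    hollow, entrywise nonnegative, with `−JD'J` positive semidefinite. -/
def IsEDM {N : ℕ} (D' : Matrix (Fin N) (Fin N) ℝ) : Prop :=
  D'.IsSymm ∧ (∀ i, D' i i = 0) ∧ (∀ i j, 0 ≤ D' i j) ∧
    (-(centerM N * D' * centerM N)).PosSemidef

/-- Entrywise spectral theorem for a real Hermitian matrix. -/
lemma spec_apply {N : ℕ} (A : Matrix (Fin N) (Fin N) ℝ) (hA : A.IsHermitian) (i j : Fin N) :
    A i j = ∑ k, hA.eigenvalues k * hA.eigenvectorBasis k i * hA.eigenvectorBasis k j := by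
  nth_rewrite 1 [hA.spectral_theorem]
  simp only [Unitary.conjStarAlgAut_apply, Matrix.mul_apply, Matrix.diagonal_apply, Finset.sum_mul, Matrix.star_apply,
    hA.eigenvectorUnitary_apply, Function.comp_apply, RCLike.ofReal_real_eq_id, id_eq]
  rw [Finset.sum_comm]
  apply Finset.sum_congr rfl
  intro k _
  rw [Finset.sum_eq_single k]
  · rw [if_pos rfl]
    show hA.eigenvectorBasis k i * hA.eigenvalues k * star (hA.eigenvectorBasis k j) = _
    rw [star_trivial]; ring
  · intro b _ hb; simp [Ne.symm hb]
  · simp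

/-- Orthonormality of eigenvectors, coordinatewise. -/
lemma orth_apply {N : ℕ} (A : Matrix (Fin N) (Fin N) ℝ) (hA : A.IsHermitian) (k l : Fin N) :
    (∑ i, hA.eigenvectorBasis k i * hA.eigenvectorBasis l i) = if k = l then 1 else 0 := by
  have := (orthonormal_iff_ite.mp hA.eigenvectorBasis.orthonormal) k l
  rw [← this]
  simp [PiLp.inner_apply, mul_comm]

/-- Row sums of the centering matrix vanish. -/
lemma centerM_row_sum {N : ℕ} (i : Fin N) : ∑ b, centerM N i b = 0 := by
  have hN : (N : ℝ) ≠ 0 := Nat.cast_ne_zero.mpr (Fin.pos i).ne'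
  simp [centerM, avgM, onesM, Matrix.sub_apply, Matrix.one_apply, Finset.sum_sub_distrib,
    Finset.sum_ite_eq, Finset.mul_sum]
  field_simp
  norm_num

/-- Column sums of the centering matrix vanish. -/
lemma centerM_col_sum {N : ℕ} (j : Fin N) : ∑ a, centerM N a j = 0 := by
  have hN : (N : ℝ) ≠ 0 := Nat.cast_ne_zero.mpr (Fin.pos j).ne'
  simp [centerM, avgM, onesM, Matrix.sub_apply, Matrix.one_apply, Finset.sum_sub_distrib,
    Finset.sum_ite_eq', Finset.mul_sum]
  field_simp
  norm_num


lemma sum_rotate {M K : Type*} [Fintype M] (u : Finset K) (f : M → M → K → ℝ) :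
    ∑ i, ∑ j, ∑ k ∈ u, f i j k = ∑ k ∈ u, ∑ i, ∑ j, f i j k :=
  calc ∑ i, ∑ j, ∑ k ∈ u, f i j k
      = ∑ i, ∑ k ∈ u, ∑ j, f i j k := Finset.sum_congr rfl fun _ _ => Finset.sum_comm
    _ = ∑ k ∈ u, ∑ i, ∑ j, f i j k := Finset.sum_comm

lemma sum_factor {M : Type*} [Fintype M] (c : ℝ) (a b : M → ℝ) :
    ∑ i : M, ∑ j : M, c * a i * b j = c * (∑ i, a i) * (∑ j, b j) :=
  calc ∑ i : M, ∑ j : M, c * a i * b j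
      = ∑ i : M, (c * a i) * ∑ j, b j := Finset.sum_congr rfl fun i _ => (Finset.mul_sum _ _ _).symm
    _ = (∑ i : M, c * a i) * ∑ j, b j := (Finset.sum_mul _ _ _).symm
    _ = c * (∑ i, a i) * (∑ j, b j) := by rw [← Finset.mul_sum]

/-- Upper bound on the optimal stress: with `Δg_i = (1/2) Σ_{λ_j<0} λ_j v_{i,j}²`,
    `L* = inf_{D' EDM} ‖D − D'‖_F² ≤ Σ_{i,j} (Δg_i + Δg_j)² + Σ_{λ_i<0} λ_i²`. -/
theorem optimal_stress_upper_bound {N : ℕ} (D : Matrix (Fin N) (Fin N) ℝ)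
    (hD : D.IsSymm) (hhollow : ∀ i, D i i = 0) (hnn : ∀ i j, 0 ≤ D i j)
    (hF : (-(centerM N * D * centerM N)).IsHermitian) :
    sInf {s : ℝ | ∃ D' : Matrix (Fin N) (Fin N) ℝ, IsEDM D' ∧ s = frobSq (D - D')} ≤
      (∑ i, ∑ j,
        ((1 / 2) * ∑ k ∈ Finset.univ.filter (fun k => hF.eigenvalues k < 0),
            hF.eigenvalues k * (hF.eigenvectorBasis k i) ^ 2 +
         (1 / 2) * ∑ k ∈ Finset.univ.filter (fun k => hF.eigenvalues k < 0),
            hF.eigenvalues k * (hF.eigenvectorBasis k j) ^ 2) ^ 2) +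
      ∑ i ∈ Finset.univ.filter (fun i => hF.eigenvalues i < 0),
        (hF.eigenvalues i) ^ 2 := by
  classical
  set F : Matrix (Fin N) (Fin N) ℝ := -(centerM N * D * centerM N) with hFdef
  set lam : Fin N → ℝ := hF.eigenvalues with hlam
  set v : Fin N → Fin N → ℝ := fun k i => hF.eigenvectorBasis k i with hv
  set neg : Finset (Fin N) := Finset.univ.filter (fun k => lam k < 0) with hneg
  -- basic spectral facts
  have hspec : ∀ i j, F i j = ∑ k, lam k * v k i * v k j := fun i j => spec_apply _ hF i j
  have horth : ∀ k l, (∑ i, v k i * v l i) = if k = l then 1 else 0 := fun k l => orth_apply _ hF k l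
  -- row/col sums of F vanish
  have hFrow : ∀ i, ∑ j, F i j = 0 := by
    intro i
    have : ∀ j, F i j = -∑ b, (centerM N * D) i b * centerM N b j := by
      intro j; simp [hFdef, Matrix.mul_apply, Matrix.neg_apply]
    simp only [this, Finset.sum_neg_distrib, neg_eq_zero]
    rw [Finset.sum_comm]
    apply Finset.sum_eq_zero
    intro b _
    rw [← Finset.mul_sum, centerM_row_sum b, mul_zero]
  have hFcol : ∀ j, ∑ i, F i j = 0 := by
    intro j
    have : ∀ i, F i j = -∑ b, centerM N i b * (D * centerM N) b j := by
      intro i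
      simp [hFdef, Matrix.mul_apply, Matrix.neg_apply, Matrix.mul_assoc]
    simp only [this, Finset.sum_neg_distrib, neg_eq_zero]
    rw [Finset.sum_comm]
    apply Finset.sum_eq_zero
    intro b _
    rw [← Finset.sum_mul, centerM_col_sum b, zero_mul]
  -- eigenvectors for nonzero eigenvalues sum to zero
  have hv1 : ∀ k, lam k ≠ 0 → ∑ i, v k i = 0 := by
    intro k hk
    have hm := hF.mulVec_eigenvectorBasis k
    have hco : ∀ i, ∑ j, F i j * v k j = lam k * v k i := by
      intro i
      have := congrFun hm i
      simpa [Matrix.mulVec, dotProduct, hv] using this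
    have hsum : ∑ i, ∑ j, F i j * v k j = lam k * ∑ i, v k i := by
      simp only [hco, Finset.mul_sum]
    rw [Finset.sum_comm] at hsum
    have hzero : ∀ j, ∑ i, F i j * v k j = 0 := by
      intro j; rw [← Finset.sum_mul, hFcol j, zero_mul]
    simp only [hzero, Finset.sum_const_zero] at hsum
    exact (mul_eq_zero.mp hsum.symm).resolve_left hk
  -- the negative spectral part
  set Δ : Fin N → ℝ := fun i => (1/2) * ∑ k ∈ neg, lam k * (v k i)^2 with hΔ
  set G : Fin N → Fin N → ℝ := fun i j => (1/2) * ∑ k ∈ neg, lam k * (v k i * v k j) with hG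
  have hGsymm : ∀ i j, G i j = G j i := by
    intro i j; simp only [hG]; congr 1; apply Finset.sum_congr rfl; intro k _; ring
  have hGdiag : ∀ i, G i i = Δ i := by
    intro i; simp only [hG, hΔ, sq]
  have hGrow : ∀ i, ∑ j, G i j = 0 := by
    intro i
    simp only [hG, ← Finset.mul_sum]
    rw [Finset.sum_comm]
    have : ∀ k ∈ neg, ∑ j, lam k * (v k i * v k j) = 0 := by
      intro k hk
      have hkneg : lam k < 0 := by simpa [hneg] using hk
      have : ∑ j, lam k * (v k i * v k j) = lam k * v k i * ∑ j, v k j := by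
        rw [Finset.mul_sum]; apply Finset.sum_congr rfl; intro j _; ring
      rw [this, hv1 k hkneg.ne, mul_zero]
    rw [Finset.sum_congr rfl this]
    simp
  have hGcol : ∀ j, ∑ i, G i j = 0 := by
    intro j
    have : ∀ i, G i j = G j i := fun i => hGsymm i j
    simp only [this]; exact hGrow j
  -- the witness EDM
  set D' : Matrix (Fin N) (Fin N) ℝ :=
    Matrix.of (fun i j => D i j - (Δ i + Δ j - 2 * G i j)) with hD'
  have hD'app : ∀ i j, D' i j = D i j - (Δ i + Δ j - 2 * G i j) := fun i j => rfl
  have hDsymm : ∀ i j, D i j = D j i := by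
    intro i j; conv_lhs => rw [← hD]
    simp [Matrix.transpose_apply]
  -- entries of D - D'
  have hdiff : ∀ i j, (D - D') i j = Δ i + Δ j - 2 * G i j := by
    intro i j; simp [hD'app, Matrix.sub_apply]
    -- D' is symmetric
  have hD'symm : D'.IsSymm := by
    show D'ᵀ = D'
    ext i j
    simp only [Matrix.transpose_apply, hD'app, hDsymm j i, hGsymm j i]
    ring
  -- D' is hollow
  have hD'hollow : ∀ i, D' i i = 0 := by
    intro i
    simp only [hD'app, hhollow i, hGdiag i]
    ring
  -- the correction term is nonpositive
  have hKle : ∀ i j, Δ i + Δ j - 2 * G i j ≤ 0 := by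
    intro i j
    have hkey : Δ i + Δ j - 2 * G i j = ∑ k ∈ neg, (1/2) * (lam k * (v k i - v k j)^2) := by
      show (1/2) * ∑ k ∈ neg, lam k * (v k i)^2 + (1/2) * ∑ k ∈ neg, lam k * (v k j)^2
          - 2 * ((1/2) * ∑ k ∈ neg, lam k * (v k i * v k j)) = _
      rw [Finset.mul_sum, Finset.mul_sum, Finset.mul_sum, Finset.mul_sum,
        ← Finset.sum_add_distrib, ← Finset.sum_sub_distrib]
      refine Finset.sum_congr rfl fun k _ => by ring
    rw [hkey]
    apply Finset.sum_nonpos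
    intro k hk
    have hkneg : lam k < 0 := by simpa [hneg] using hk
    have : lam k * (v k i - v k j)^2 ≤ 0 := mul_nonpos_of_nonpos_of_nonneg hkneg.le (sq_nonneg _)
    linarith
  -- D' is entrywise nonnegative
  have hD'nn : ∀ i j, 0 ≤ D' i j := by
    intro i j
    rw [hD'app]
    have := hKle i j
    have := hnn i j
    linarith
  -- matrix form of the correction
  set Gm : Matrix (Fin N) (Fin N) ℝ := Matrix.of (fun i j => G i j) with hGm
  set Rm : Matrix (Fin N) (Fin N) ℝ := Matrix.of (fun i j => Δ i) with hRm
  set Cm : Matrix (Fin N) (Fin N) ℝ := Matrix.of (fun i j => Δ j) with hCm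
  have hD'mat : D' = D - (Rm + Cm - (2:ℝ) • Gm) := by
    ext i j
    simp only [hD'app, hRm, hCm, hGm, Matrix.sub_apply, Matrix.add_apply, Matrix.smul_apply,
      Matrix.of_apply, smul_eq_mul]
  have hRmJ : Rm * centerM N = 0 := by
    ext i j
    simp only [Matrix.mul_apply, hRm, Matrix.of_apply, Matrix.zero_apply]
    rw [← Finset.mul_sum, centerM_col_sum j, mul_zero]
  have hJCm : centerM N * Cm = 0 := by
    ext i j
    simp only [Matrix.mul_apply, hCm, Matrix.of_apply, Matrix.zero_apply]
    rw [← Finset.sum_mul, centerM_row_sum i, zero_mul]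
  have hJGm : centerM N * Gm = Gm := by
    ext i j
    simp only [Matrix.mul_apply, hGm, Matrix.of_apply]
    have hN : (N : ℝ) ≠ 0 := Nat.cast_ne_zero.mpr (Fin.pos i).ne'
    have : ∀ b, centerM N i b * G b j = (if i = b then G b j else 0) - (N:ℝ)⁻¹ * G b j := by
      intro b
      simp only [centerM, avgM, onesM, Matrix.sub_apply, Matrix.one_apply, Matrix.smul_apply,
        Matrix.of_apply, smul_eq_mul, mul_one]
      split_ifs <;> ring
    rw [Finset.sum_congr rfl fun b _ => this b, Finset.sum_sub_distrib, ← Finset.mul_sum,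
      hGcol j, mul_zero, sub_zero, Finset.sum_ite_eq]
    simp
  have hGmJ : Gm * centerM N = Gm := by
    ext i j
    simp only [Matrix.mul_apply, hGm, Matrix.of_apply]
    have : ∀ b, G i b * centerM N b j = (if b = j then G i b else 0) - (N:ℝ)⁻¹ * G i b := by
      intro b
      simp only [centerM, avgM, onesM, Matrix.sub_apply, Matrix.one_apply, Matrix.smul_apply,
        Matrix.of_apply, smul_eq_mul, mul_one]
      split_ifs <;> ring
    rw [Finset.sum_congr rfl fun b _ => this b, Finset.sum_sub_distrib, ← Finset.mul_sum,
      hGrow i, mul_zero, sub_zero, Finset.sum_ite_eq']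
    simp
  -- the criterion matrix of D'
  have hmain : -(centerM N * D' * centerM N) = F - (2:ℝ) • Gm := by
    rw [hD'mat]
    have expand : centerM N * (D - (Rm + Cm - (2:ℝ) • Gm)) * centerM N
        = centerM N * D * centerM N - (centerM N * Rm * centerM N + centerM N * Cm * centerM N
          - (2:ℝ) • (centerM N * Gm * centerM N)) := by
      simp only [Matrix.mul_sub, Matrix.sub_mul, Matrix.mul_add, Matrix.add_mul,
        Matrix.mul_smul, Matrix.smul_mul]
    rw [expand, Matrix.mul_assoc (centerM N) Rm (centerM N), hRmJ, Matrix.mul_zero, hJCm,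
      Matrix.zero_mul, hJGm, hGmJ, hFdef]
    ext i j
    simp [Matrix.neg_apply, Matrix.sub_apply, Matrix.smul_apply]
    ring
  -- entries of F - 2G are the nonnegative spectral part
  set pos : Finset (Fin N) := Finset.univ.filter (fun k => ¬ lam k < 0) with hpos
  have h2G : ∀ i j, 2 * G i j = ∑ k ∈ neg, lam k * (v k i * v k j) := by
    intro i j
    show 2 * ((1/2) * ∑ k ∈ neg, lam k * (v k i * v k j)) = _
    ring
  have hE : ∀ i j, (F - (2:ℝ) • Gm) i j = ∑ k ∈ pos, lam k * (v k i * v k j) := by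
    intro i j
    have hsplit := Finset.sum_filter_add_sum_filter_not Finset.univ (fun k => lam k < 0)
      (fun k => lam k * (v k i * v k j))
    have hFij : F i j = ∑ k, lam k * (v k i * v k j) := by
      rw [hspec i j]
      exact Finset.sum_congr rfl fun k _ => by ring
    simp only [Matrix.sub_apply, Matrix.smul_apply, hGm, Matrix.of_apply, smul_eq_mul]
    rw [hFij, ← hsplit]
    rw [← hneg, ← hpos]
    have := h2G i j
    linarith [h2G i j]
  -- positive semidefiniteness
  have hPSD : (-(centerM N * D' * centerM N)).PosSemidef := by
    rw [hmain, Matrix.posSemidef_iff_dotProduct_mulVec]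
    constructor
    · show (F - (2:ℝ) • Gm)ᴴ = F - (2:ℝ) • Gm
      ext i j
      simp only [Matrix.conjTranspose_apply, star_trivial]
      rw [hE i j, hE j i]
      exact Finset.sum_congr rfl fun k _ => by ring
    · intro x
      have hstar : star x = x := by funext i; simp
      rw [hstar]
      have hquad : x ⬝ᵥ ((F - (2:ℝ) • Gm) *ᵥ x)
          = ∑ k ∈ pos, lam k * (∑ i, v k i * x i) * (∑ j, v k j * x j) := by
        calc x ⬝ᵥ ((F - (2:ℝ) • Gm) *ᵥ x)
            = ∑ i, ∑ j, x i * ((F - (2:ℝ) • Gm) i j * x j) := by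
              simp only [dotProduct, Matrix.mulVec, Finset.mul_sum]
          _ = ∑ i, ∑ j, ∑ k ∈ pos, lam k * (v k i * x i) * (v k j * x j) := by
              refine Finset.sum_congr rfl fun i _ => Finset.sum_congr rfl fun j _ => ?_
              rw [hE i j, Finset.sum_mul, Finset.mul_sum]
              exact Finset.sum_congr rfl fun k _ => by ring
          _ = ∑ k ∈ pos, ∑ i, ∑ j, lam k * (v k i * x i) * (v k j * x j) := sum_rotate _ _
          _ = ∑ k ∈ pos, lam k * (∑ i, v k i * x i) * (∑ j, v k j * x j) := by
              refine Finset.sum_congr rfl fun k _ => ?_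
              rw [sum_factor (lam k) (fun i => v k i * x i) (fun j => v k j * x j)]
      rw [hquad]
      apply Finset.sum_nonneg
      intro k hk
      have hknn : 0 ≤ lam k := by
        have := (Finset.mem_filter.mp hk).2
        linarith [not_lt.mp this]
      have : lam k * (∑ i, v k i * x i) * (∑ j, v k j * x j)
          = lam k * (∑ i, v k i * x i)^2 := by ring
      rw [this]
      positivity
  have hEDM : IsEDM D' := ⟨hD'symm, hD'hollow, hD'nn, hPSD⟩
  -- the stress of the witness
  have hfrob : frobSq (D - D')
      = (∑ i, ∑ j, (Δ i + Δ j)^2) + ∑ k ∈ neg, lam k ^ 2 := by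
    have hexp : ∀ i j : Fin N, ((D - D') i j)^2
        = (Δ i + Δ j)^2 - 2*(Δ i + Δ j)*(2*G i j) + (2*G i j)^2 := by
      intro i j; rw [hdiff i j]; ring
    have hcross : ∑ i, ∑ j, 2*(Δ i + Δ j)*(2*G i j) = 0 := by
      have h1 : ∀ i, ∑ j, 2*(Δ i + Δ j)*(2*G i j)
          = 4*Δ i*(∑ j, G i j) + ∑ j, 4*Δ j*G i j := by
        intro i
        rw [Finset.mul_sum, ← Finset.sum_add_distrib]
        exact Finset.sum_congr rfl fun j _ => by ring
      simp only [h1, hGrow, mul_zero, zero_add]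
      rw [Finset.sum_comm]
      apply Finset.sum_eq_zero
      intro j _
      rw [← Finset.mul_sum, hGcol j, mul_zero]
    have hsq : ∑ i, ∑ j, (2*G i j)^2 = ∑ k ∈ neg, lam k ^ 2 := by
      have h1 : ∀ i j : Fin N, (2*G i j)^2
          = ∑ k ∈ neg, ∑ l ∈ neg, (lam k * (v k i * v k j)) * (lam l * (v l i * v l j)) := by
        intro i j
        rw [sq, h2G i j, Finset.sum_mul_sum]
      calc ∑ i, ∑ j, (2*G i j)^2
          = ∑ i, ∑ j, ∑ k ∈ neg, ∑ l ∈ neg,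
              (lam k * (v k i * v k j)) * (lam l * (v l i * v l j)) := by
            exact Finset.sum_congr rfl fun i _ => Finset.sum_congr rfl fun j _ => h1 i j
        _ = ∑ k ∈ neg, ∑ i, ∑ j, ∑ l ∈ neg,
              (lam k * (v k i * v k j)) * (lam l * (v l i * v l j)) := sum_rotate _ _
        _ = ∑ k ∈ neg, ∑ l ∈ neg, ∑ i, ∑ j,
              (lam k * (v k i * v k j)) * (lam l * (v l i * v l j)) := by
            exact Finset.sum_congr rfl fun k _ => sum_rotate _ _
        _ = ∑ k ∈ neg, ∑ l ∈ neg, (if k = l then lam k ^ 2 else 0) := by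
            refine Finset.sum_congr rfl fun k _ => Finset.sum_congr rfl fun l _ => ?_
            have h2 : ∀ i j : Fin N, (lam k * (v k i * v k j)) * (lam l * (v l i * v l j))
                = (lam k * lam l) * (v k i * v l i) * (v k j * v l j) := by
              intro i j; ring
            rw [Finset.sum_congr rfl fun i _ => Finset.sum_congr rfl fun j _ => h2 i j,
              sum_factor (lam k * lam l) (fun i => v k i * v l i) (fun j => v k j * v l j),
              horth k l]
            split_ifs with h
            · subst h; ring
            · ring
        _ = ∑ k ∈ neg, lam k ^ 2 := by
            refine Finset.sum_congr rfl fun k hk => ?_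
            rw [Finset.sum_ite_eq]
            simp [hk]
    show ∑ i, ∑ j, ((D - D') i j)^2 = _
    simp only [hexp]
    simp only [Finset.sum_add_distrib, Finset.sum_sub_distrib]
    rw [hcross, hsq]
    ring
  -- conclude
  have hbdd : BddBelow {s : ℝ | ∃ D'' : Matrix (Fin N) (Fin N) ℝ, IsEDM D'' ∧ s = frobSq (D - D'')} := by
    refine ⟨0, fun s hs => ?_⟩
    obtain ⟨E, _, rfl⟩ := hs
    apply Finset.sum_nonneg
    intro i _
    apply Finset.sum_nonneg
    intro j _
    positivity
  have hmem : frobSq (D - D') ∈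
      {s : ℝ | ∃ D'' : Matrix (Fin N) (Fin N) ℝ, IsEDM D'' ∧ s = frobSq (D - D'')} :=
    ⟨D', hEDM, rfl⟩
  have hle := csInf_le hbdd hmem
  rw [hfrob] at hle
  exact hle
end
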